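/- There exists a bounded linear operator C : H → H with operator norm ‖C‖ ≤ 1 such that B = A^{1/2} ∘ C ∘ A^{1/2}. -/

import Mathlib

open scoped InnerProductSpace

lemma aux_factor_through {H : Type*} [NormedAddCommGroup H] [InnerProductSpace ℝ H]
    [CompleteSpace H] (S T : H →L[ℝ] H) (c : ℝ) (hc : 0 ≤ c)
    (hT : ∀ f, ‖T f‖ ≤ c * ‖S f‖) :
    ∃ U : H →L[ℝ] H, ‖U‖ ≤ c ∧ U.comp S = T := by
  classical
  set Sl : H →ₗ[ℝ] H := (S : H →ₗ[ℝ] H) with hSl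
  have hker : LinearMap.ker Sl ≤ LinearMap.ker (T : H →ₗ[ℝ] H) := by
    intro f hf
    have hf' : S f = 0 := hf
    have : ‖T f‖ ≤ 0 := by simpa [hf'] using hT f
    simpa [LinearMap.mem_ker] using norm_le_zero_iff.mp this
  set Tbar : (H ⧸ LinearMap.ker Sl) →ₗ[ℝ] H :=
    Submodule.liftQ (LinearMap.ker Sl) (T : H →ₗ[ℝ] H) hker with hTbar
  set c₀ : LinearMap.range Sl →ₗ[ℝ] H := Tbar.comp Sl.quotKerEquivRange.symm.toLinearMap
    with hc₀
  have key : ∀ g : H, c₀ ⟨Sl g, LinearMap.mem_range_self Sl g⟩ = T g := by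
    intro g
    have h1 : Sl.quotKerEquivRange.symm ⟨Sl g, LinearMap.mem_range_self Sl g⟩ =
        (LinearMap.ker Sl).mkQ g := Sl.quotKerEquivRange_symm_apply_image g _
    simp only [hc₀, LinearMap.comp_apply, LinearEquiv.coe_toLinearMap]
    rw [h1]
    simp [hTbar, Submodule.mkQ_apply, Submodule.liftQ_apply]
  have bound : ∀ v : LinearMap.range Sl, ‖c₀ v‖ ≤ c * ‖v‖ := by
    rintro ⟨v, hv⟩
    obtain ⟨g, rfl⟩ := hv
    have := key g
    rw [show (⟨Sl g, ⟨g, rfl⟩⟩ : LinearMap.range Sl) = ⟨Sl g, LinearMap.mem_range_self Sl g⟩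
      from rfl, this]
    exact hT g
  set c₀L : LinearMap.range Sl →L[ℝ] H := c₀.mkContinuous c bound with hc₀L
  have c₀L_apply : ∀ v, c₀L v = c₀ v := fun v => rfl
  set K : Submodule ℝ H := (LinearMap.range Sl).topologicalClosure with hK
  set einc : LinearMap.range Sl →L[ℝ] K :=
    LinearMap.mkContinuous (Submodule.inclusion (LinearMap.range Sl).le_topologicalClosure)
      1 (fun v => by simp) with heinc
  have heinc_apply : ∀ v : LinearMap.range Sl, ((einc v : K) : H) = (v : H) := fun v => rfl
  have hiso : Isometry einc := AddMonoidHomClass.isometry_of_norm _ (fun v => rfl)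
  have hdense : DenseRange einc := by
    intro y
    rw [closure_subtype]
    have himg : (((↑) : K → H) '' Set.range einc : Set H) = (LinearMap.range Sl : Set H) := by
      ext x
      constructor
      · rintro ⟨z, ⟨v, rfl⟩, rfl⟩
        exact v.2
      · rintro hx
        exact ⟨einc ⟨x, hx⟩, ⟨⟨x, hx⟩, rfl⟩, rfl⟩
    rw [himg]
    exact (Submodule.topologicalClosure_coe (LinearMap.range Sl)) ▸ y.2
  set Ubar : K →L[ℝ] H := c₀L.extend einc with hUbar
  have hUbar_e : ∀ v, Ubar (einc v) = c₀L v := fun v =>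
    ContinuousLinearMap.extend_eq c₀L hdense hiso.isUniformInducing v
  have hUbar_norm : ∀ w : K, ‖Ubar w‖ ≤ c * ‖w‖ := by
    refine isClosed_property hdense (isClosed_le Ubar.continuous.norm
      (continuous_const.mul continuous_norm)) ?_
    intro v
    rw [hUbar_e]
    exact bound v
  refine ⟨Ubar.comp (Submodule.orthogonalProjectionOnto K), ?_, ?_⟩
  · refine ContinuousLinearMap.opNorm_le_bound _ hc fun x => ?_
    calc ‖Ubar (Submodule.orthogonalProjectionOnto K x)‖ ≤ c * ‖Submodule.orthogonalProjectionOnto K x‖ := hUbar_norm _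
    _ ≤ c * ‖x‖ := by
        refine mul_le_mul_of_nonneg_left ?_ hc
        calc ‖Submodule.orthogonalProjectionOnto K x‖ ≤ ‖Submodule.orthogonalProjectionOnto K‖ * ‖x‖ :=
          (Submodule.orthogonalProjectionOnto K).le_opNorm x
        _ ≤ 1 * ‖x‖ := mul_le_mul_of_nonneg_right (Submodule.orthogonalProjectionOnto_norm_le K)
            (norm_nonneg x)
        _ = ‖x‖ := one_mul _
  · ext g
    have hm : S g ∈ K := (LinearMap.range Sl).le_topologicalClosure
      (LinearMap.mem_range_self Sl g)
    have h2 : Submodule.orthogonalProjectionOnto K (S g) = einc ⟨Sl g, LinearMap.mem_range_self Sl g⟩ := by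
      have := Submodule.orthogonalProjectionOnto_mem_subspace_eq_self (K := K) ⟨S g, hm⟩
      rw [show ((⟨S g, hm⟩ : K) : H) = S g from rfl] at this
      rw [this]
      rfl
    show Ubar (Submodule.orthogonalProjectionOnto K (S g)) = T g
    rw [h2, hUbar_e]
    exact key g

open scoped InnerProductSpace


/-- Lemma 1 / Baker's theorem: if `A` is a positive self-adjoint bounded
operator on a real Hilbert space `H` with positive square root `S = A^{1/2}`, and the block
operator `[[A, B], [B*, A]]` is positive, i.e. `⟪f, Af⟫ + 2⟪f, Bg⟫ + ⟪g, Ag⟫ ≥ 0` for all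
`f, g`, then there exists a bounded operator `C` with `‖C‖ ≤ 1` and `B = A^{1/2} C A^{1/2}`. -/
theorem exists_contraction_factorization
    {H : Type*} [NormedAddCommGroup H] [InnerProductSpace ℝ H] [CompleteSpace H]
    (A B S : H →L[ℝ] H)
    (hA : IsSelfAdjoint A) (hApos : ∀ f : H, 0 ≤ ⟪f, A f⟫_ℝ)
    (hSsa : IsSelfAdjoint S) (hSpos : ∀ f : H, 0 ≤ ⟪f, S f⟫_ℝ) (hSsq : S * S = A)
    (hblock : ∀ f g : H, 0 ≤ ⟪f, A f⟫_ℝ + 2 * ⟪f, B g⟫_ℝ + ⟪g, A g⟫_ℝ) :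
    ∃ C : H →L[ℝ] H, ‖C‖ ≤ 1 ∧ B = S * C * S := by
  classical
  have hSadjeq : ContinuousLinearMap.adjoint S = S := hSsa.adjoint_eq
  have hSA : ∀ f x : H, ⟪S f, x⟫_ℝ = ⟪f, S x⟫_ℝ := by
    intro f x
    rw [← hSadjeq, ContinuousLinearMap.adjoint_inner_left, hSadjeq]
  have hAf : ∀ f : H, ⟪f, A f⟫_ℝ = ‖S f‖ ^ 2 := by
    intro f
    have : A f = S (S f) := by rw [← hSsq]; rfl
    rw [this, ← hSA, real_inner_self_eq_norm_sq]
  have hkey : ∀ f g : H, ⟪f, B g⟫_ℝ ≤ ‖S f‖ * ‖S g‖ := by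
    intro f g
    have quad : ∀ t : ℝ, 0 ≤ ‖S f‖ ^ 2 * (t * t) + (2 * ⟪f, B g⟫_ℝ) * t + ‖S g‖ ^ 2 := by
      intro t
      have := hblock (t • f) g
      rw [hAf, hAf] at this
      simp only [map_smul, inner_smul_left, inner_smul_right, conj_trivial, norm_smul,
        mul_pow, Real.norm_eq_abs, sq_abs] at this
      nlinarith [this]
    have hd := discrim_le_zero quad
    rw [discrim] at hd
    nlinarith [mul_nonneg (norm_nonneg (S f)) (norm_nonneg (S g)), hd]
  set Bt := ContinuousLinearMap.adjoint B with hBtdef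
  have hBt : ∀ f g : H, ⟪Bt f, g⟫_ℝ = ⟪f, B g⟫_ℝ := fun f g =>
    ContinuousLinearMap.adjoint_inner_left B g f
  have hBtb : ∀ f : H, ‖Bt f‖ ≤ ‖S‖ * ‖S f‖ := by
    intro f
    by_cases h0 : ‖Bt f‖ = 0
    · rw [h0]; positivity
    · have hpos : 0 < ‖Bt f‖ := lt_of_le_of_ne (norm_nonneg _) (Ne.symm h0)
      have h1 : ‖Bt f‖ ^ 2 = ⟪f, B (Bt f)⟫_ℝ := by
        rw [← hBt, real_inner_self_eq_norm_sq]
      have h2 : ⟪f, B (Bt f)⟫_ℝ ≤ ‖S f‖ * ‖S (Bt f)‖ := hkey f (Bt f)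
      have h3 : ‖S (Bt f)‖ ≤ ‖S‖ * ‖Bt f‖ := S.le_opNorm _
      nlinarith [norm_nonneg (S f)]
  obtain ⟨E, hEn, hES⟩ := aux_factor_through S Bt ‖S‖ (norm_nonneg S) hBtb
  set Et := ContinuousLinearMap.adjoint E with hEtdef
  have hSEt : S.comp Et = B := by
    have := congrArg ContinuousLinearMap.adjoint hES
    rw [ContinuousLinearMap.adjoint_comp, hSadjeq, hBtdef,
      ContinuousLinearMap.adjoint_adjoint] at this
    exact this
  set K : Submodule ℝ H := (LinearMap.range (S : H →ₗ[ℝ] H)).topologicalClosure with hK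
  have hKorth : ∀ v ∈ Kᗮ, S v = 0 := by
    intro v hv
    rw [← inner_self_eq_zero (𝕜 := ℝ)]
    have : ∀ u : H, ⟪S v, u⟫_ℝ = 0 := by
      intro u
      rw [hSA, real_inner_comm]
      have hSu : S u ∈ K := (LinearMap.range (S : H →ₗ[ℝ] H)).le_topologicalClosure
        (LinearMap.mem_range_self _ u)
      exact (Submodule.mem_orthogonal K v).mp hv (S u) hSu
    exact this (S v)
  set Pc : H →L[ℝ] H := K.subtypeL.comp (Submodule.orthogonalProjectionOnto K) with hPc
  have hPcmem : ∀ x : H, Pc x ∈ K := fun x => (Submodule.orthogonalProjectionOnto K x).2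
  have hSP : ∀ x : H, S (Pc x) = S x := by
    intro x
    have hsub : x - Pc x ∈ Kᗮ := Submodule.sub_starProjection_mem_orthogonal (K := K) x
    have := hKorth _ hsub
    rw [map_sub] at this
    linear_combination (norm := abel) -this
  set D := Pc.comp Et with hD
  have hSD : S.comp D = B := by
    ext x
    show S (Pc (Et x)) = B x
    rw [hSP]
    exact congrFun (congrArg (fun f => f.toFun) hSEt) x
  have hDb : ∀ g : H, ‖D g‖ ≤ 1 * ‖S g‖ := by
    intro g
    have hclaim : ∀ u ∈ K, ⟪u, Et g⟫_ℝ ≤ ‖u‖ * ‖S g‖ := by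
      intro u hu
      have hclosed : IsClosed {u : H | ⟪u, Et g⟫_ℝ ≤ ‖u‖ * ‖S g‖} :=
        isClosed_le (Continuous.inner continuous_id continuous_const)
          (continuous_norm.mul continuous_const)
      have hsub : (LinearMap.range (S : H →ₗ[ℝ] H) : Set H) ⊆
          {u : H | ⟪u, Et g⟫_ℝ ≤ ‖u‖ * ‖S g‖} := by
        rintro _ ⟨f, rfl⟩
        show ⟪S f, Et g⟫_ℝ ≤ ‖S f‖ * ‖S g‖
        rw [ContinuousLinearMap.adjoint_inner_right]
        have hEf : E (S f) = Bt f := congrFun (congrArg (fun f => f.toFun) hES) f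
        rw [show E (S f) = Bt f from hEf, hBt]
        exact hkey f g
      have : (K : Set H) ⊆ {u : H | ⟪u, Et g⟫_ℝ ≤ ‖u‖ * ‖S g‖} := by
        rw [hK, Submodule.topologicalClosure_coe]
        exact closure_minimal hsub hclosed
      exact this hu
    have hDK : D g ∈ K := hPcmem (Et g)
    have hDinner : ⟪D g, Et g⟫_ℝ = ‖D g‖ ^ 2 := by
      have hsub : Et g - D g ∈ Kᗮ := Submodule.sub_starProjection_mem_orthogonal (K := K) (Et g)
      have hzero : ⟪D g, Et g - D g⟫_ℝ = 0 :=
        (Submodule.mem_orthogonal K (Et g - D g)).mp hsub (D g) hDK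
      rw [inner_sub_right] at hzero
      rw [← real_inner_self_eq_norm_sq]
      linarith
    have := hclaim (D g) hDK
    rw [hDinner] at this
    by_cases h0 : ‖D g‖ = 0
    · rw [h0]; positivity
    · have hpos : 0 < ‖D g‖ := lt_of_le_of_ne (norm_nonneg _) (Ne.symm h0)
      nlinarith
  obtain ⟨C, hCn, hCS⟩ := aux_factor_through S D 1 zero_le_one hDb
  refine ⟨C, by simpa using hCn, ?_⟩
  ext x
  have h1 : C (S x) = D x := congrFun (congrArg (fun f => f.toFun) hCS) x
  show B x = S (C (S x))
  rw [h1]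
  exact (congrFun (congrArg (fun f => f.toFun) hSD) x).symm
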